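/- Let Ω be an m-form of comass one on a Euclidean space V (i.e. |Ω(X₁,...,Xₘ)| ≤ 1 for every orthonormal system X₁,...,Xₘ). If X₁,...,Xₘ is an orthonormal system, U is a unit vector orthogonal to X₁, and we set cosθ = Ω(X₁,...,Xₘ), then |Ω(U,X₂,...,Xₘ)| ≤ sinθ, i.e. Ω(U,X₂,...,Xₘ)² ≤ 1 − Ω(X₁,...,Xₘ)². -/

import Mathlib

open scoped RealInnerProductSpace

/-- Lemma 2.1: for a comass-one `m`-form `Ω`, an orthonormal system `X₁,...,Xₘ`,
and a unit vector `U` orthogonal to `X₁` such that `U, X₂, ..., Xₘ` is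
orthonormal, one has `Ω(U,X₂,...,Xₘ)² ≤ 1 - Ω(X₁,...,Xₘ)²`. -/
theorem stmt_0 {V : Type*} [NormedAddCommGroup V] [InnerProductSpace ℝ V]
    {m : ℕ} (hm : 0 < m) (Ω : AlternatingMap ℝ V ℝ (Fin m))
    (hcomass : ∀ Y : Fin m → V, Orthonormal ℝ Y → |Ω Y| ≤ 1)
    (X : Fin m → V) (hX : Orthonormal ℝ X) (U : V)
    (hU : Orthonormal ℝ (Function.update X ⟨0, hm⟩ U))
    (hUX : ⟪U, X ⟨0, hm⟩⟫ = 0) :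
    (Ω (Function.update X ⟨0, hm⟩ U)) ^ 2 ≤ 1 - (Ω X) ^ 2 := by
  set i0 : Fin m := ⟨0, hm⟩
  set a := Ω X with ha
  set b := Ω (Function.update X i0 U) with hb
  suffices h : a ^ 2 + b ^ 2 ≤ 1 by linarith
  rcases eq_or_ne (a ^ 2 + b ^ 2) 0 with h0 | h0
  · linarith
  have hr : 0 < Real.sqrt (a ^ 2 + b ^ 2) := Real.sqrt_pos.2 <|
    lt_of_le_of_ne (by positivity) (Ne.symm h0)
  set r := Real.sqrt (a ^ 2 + b ^ 2) with hrdef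
  have hr2 : r ^ 2 = a ^ 2 + b ^ 2 := Real.sq_sqrt (by positivity)
  set c := a / r
  set s := b / r
  have hcs : c ^ 2 + s ^ 2 = 1 := by
    simp only [c, s]
    field_simp
    linarith [hr2]
  -- the combined vector
  set W := Function.update X i0 (c • X i0 + s • U) with hW
  have hXU : ∀ j, j ≠ i0 → ⟪U, X j⟫ = 0 := by
    intro j hj
    have := hU.2 (Ne.symm hj)
    simpa [Function.update_of_ne hj, Function.update_self] using this
  have hnU : ‖U‖ = 1 := by simpa using hU.1 i0
  have hWon : Orthonormal ℝ W := by
    rw [orthonormal_iff_ite]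
    intro i j
    rcases eq_or_ne i i0 with rfl | hi <;> rcases eq_or_ne j i0 with h | hj
    · subst h
      have h1 : ⟪X i0, U⟫ = 0 := by rw [real_inner_comm]; exact hUX
      simp only [hW, Function.update_self, if_pos rfl]
      rw [real_inner_add_add_self, real_inner_smul_left, real_inner_smul_left,
        real_inner_smul_left, real_inner_smul_right, real_inner_smul_right,
        real_inner_smul_right, h1, real_inner_self_eq_norm_sq,
        real_inner_self_eq_norm_sq, hX.1 i0, hnU]
      simp only [if_true]
      nlinarith [hcs]
    · simp only [hW, Function.update_self, Function.update_of_ne hj, if_neg (Ne.symm hj)]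
      rw [inner_add_left, real_inner_smul_left, real_inner_smul_left,
        hX.2 (Ne.symm hj), hXU j hj]
      ring
    · subst h
      simp only [hW, Function.update_self, Function.update_of_ne hi, if_neg hi]
      rw [inner_add_right, real_inner_smul_right, real_inner_smul_right,
        hX.2 hi, real_inner_comm U (X i), hXU i hi]
      ring
    · simp only [hW, Function.update_of_ne hi, Function.update_of_ne hj]
      by_cases hij : i = j
      · subst hij
        simp [real_inner_self_eq_norm_sq, hX.1 i]
      · simp [hij, hX.2 hij]
  have hval : Ω W = c * a + s * b := by
    rw [hW, Ω.map_update_add, Ω.map_update_smul, Ω.map_update_smul, Function.update_eq_self]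
    simp [smul_eq_mul, ← ha, ← hb]
  have hr1 : r ≤ 1 := by
    have := hcomass W hWon
    rw [hval] at this
    have hcab : c * a + s * b = r := by
      simp only [c, s]
      field_simp
      linarith [hr2]
    rw [hcab] at this
    exact le_of_abs_le this
  nlinarith [hr2, hr.le]
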